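/- Let C → Q (with map φ) be a strong couple of semiunital quantales. Then φ restricts to an order isomorphism between the right-sided elements of C and the right-sided elements of Q, with inverse r ↦ r·1_C (the action of r ∈ R(Q) on the top element of C); similarly for left-sided elements. -/

import Mathlib

/-- A quantale: a complete lattice with an associative multiplication
distributing over arbitrary joins in both variables. -/
class Quantale' (α : Type*) extends CompleteLattice α, Mul α where
  mul_assoc : ∀ a b c : α, a * b * c = a * (b * c)
  mul_sSup : ∀ (a : α) (s : Set α), a * sSup s = ⨆ b ∈ s, a * b
  sSup_mul : ∀ (s : Set α) (a : α), sSup s * a = ⨆ b ∈ s, b * a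

/-- A couple of quantales: a quantale `Q`, a quantale `C` which is also a
`Q`-bimodule, and a coupling map `φ : C → Q` which is a join-preserving
`Q`-bimodule homomorphism satisfying `φ(c₁)·c₂ = c₁·φ(c₂) = c₁·c₂`. -/
structure Couple (C Q : Type*) [Quantale' C] [Quantale' Q] where
  φ : C → Q
  /-- the left action of `Q` on `C` -/
  act : Q → C → C
  /-- the right action of `Q` on `C` -/
  actr : C → Q → C
  act_sSup : ∀ (a : Q) (s : Set C), act a (sSup s) = ⨆ c ∈ s, act a c
  sSup_act : ∀ (s : Set Q) (c : C), act (sSup s) c = ⨆ a ∈ s, act a c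
  actr_sSup : ∀ (c : C) (s : Set Q), actr c (sSup s) = ⨆ a ∈ s, actr c a
  sSup_actr : ∀ (s : Set C) (a : Q), actr (sSup s) a = ⨆ c ∈ s, actr c a
  act_mul : ∀ (a b : Q) (c : C), act (a * b) c = act a (act b c)
  actr_mul : ∀ (c : C) (a b : Q), actr c (a * b) = actr (actr c a) b
  act_actr : ∀ (a : Q) (c : C) (b : Q), actr (act a c) b = act a (actr c b)
  φ_sSup : ∀ s : Set C, φ (sSup s) = ⨆ c ∈ s, φ c
  φ_act : ∀ (a : Q) (c : C), φ (act a c) = a * φ c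
  φ_actr : ∀ (c : C) (a : Q), φ (actr c a) = φ c * a
  couple_left : ∀ c₁ c₂ : C, act (φ c₁) c₂ = c₁ * c₂
  couple_right : ∀ c₁ c₂ : C, actr c₁ (φ c₂) = c₁ * c₂


section Helpers
variable {C Q : Type*} [Quantale' C] [Quantale' Q] (cp : Couple C Q)

lemma Couple.phi_mono {a b : C} (h : a ≤ b) : cp.φ a ≤ cp.φ b := by
  have h1 : cp.φ (sSup ({a, b} : Set C)) = cp.φ a ⊔ cp.φ b := by
    rw [cp.φ_sSup]; exact iSup_pair
  rw [sSup_pair, sup_eq_right.mpr h] at h1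
  exact le_sup_left.trans h1.ge

lemma Couple.act_mono_left {a b : Q} (c : C) (h : a ≤ b) : cp.act a c ≤ cp.act b c := by
  have h1 : cp.act (sSup ({a, b} : Set Q)) c = cp.act a c ⊔ cp.act b c := by
    rw [cp.sSup_act]; exact iSup_pair
  rw [sSup_pair, sup_eq_right.mpr h] at h1
  exact le_sup_left.trans h1.ge

lemma Couple.act_mono_right (a : Q) {c d : C} (h : c ≤ d) : cp.act a c ≤ cp.act a d := by
  have h1 : cp.act a (sSup ({c, d} : Set C)) = cp.act a c ⊔ cp.act a d := by
    rw [cp.act_sSup]; exact iSup_pair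
  rw [sSup_pair, sup_eq_right.mpr h] at h1
  exact le_sup_left.trans h1.ge

lemma Couple.actr_mono_left {c d : C} (a : Q) (h : c ≤ d) : cp.actr c a ≤ cp.actr d a := by
  have h1 : cp.actr (sSup ({c, d} : Set C)) a = cp.actr c a ⊔ cp.actr d a := by
    rw [cp.sSup_actr]; exact iSup_pair
  rw [sSup_pair, sup_eq_right.mpr h] at h1
  exact le_sup_left.trans h1.ge

lemma Couple.actr_mono_right (c : C) {a b : Q} (h : a ≤ b) : cp.actr c a ≤ cp.actr c b := by
  have h1 : cp.actr c (sSup ({a, b} : Set Q)) = cp.actr c a ⊔ cp.actr c b := by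
    rw [cp.actr_sSup]; exact iSup_pair
  rw [sSup_pair, sup_eq_right.mpr h] at h1
  exact le_sup_left.trans h1.ge

end Helpers

/-- For a strong couple of semiunital quantales, `φ` restricts to an order
isomorphism between the right-sided (resp. left-sided) elements of `C` and of
`Q`, with inverse `r ↦ r·1_C` (resp. `l ↦ 1_C·l`). -/
theorem stmt7 {C Q : Type*} [Quantale' C] [Quantale' Q] (cp : Couple C Q)
    (hstrong : cp.φ ⊤ = ⊤)
    (hQr : ∀ r : Q, r * ⊤ ≤ r → r * ⊤ = r)
    (hQl : ∀ l : Q, ⊤ * l ≤ l → ⊤ * l = l)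
    (hCr : ∀ r : C, cp.actr r ⊤ ≤ r → cp.actr r ⊤ = r)
    (hCl : ∀ l : C, cp.act ⊤ l ≤ l → cp.act ⊤ l = l) :
    -- right-sided part
    ((∀ r : C, cp.actr r ⊤ ≤ r → cp.φ r * ⊤ ≤ cp.φ r) ∧
     (∀ s : Q, s * ⊤ ≤ s → cp.actr (cp.act s ⊤) ⊤ ≤ cp.act s ⊤) ∧
     (∀ s : Q, s * ⊤ ≤ s → cp.φ (cp.act s ⊤) = s) ∧
     (∀ r : C, cp.actr r ⊤ ≤ r → cp.act (cp.φ r) ⊤ = r) ∧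
     (∀ r₁ r₂ : C, cp.actr r₁ ⊤ ≤ r₁ → cp.actr r₂ ⊤ ≤ r₂ →
        (cp.φ r₁ ≤ cp.φ r₂ ↔ r₁ ≤ r₂))) ∧
    -- left-sided part
    ((∀ l : C, cp.act ⊤ l ≤ l → ⊤ * cp.φ l ≤ cp.φ l) ∧
     (∀ t : Q, ⊤ * t ≤ t → cp.act ⊤ (cp.actr ⊤ t) ≤ cp.actr ⊤ t) ∧
     (∀ t : Q, ⊤ * t ≤ t → cp.φ (cp.actr ⊤ t) = t) ∧
     (∀ l : C, cp.act ⊤ l ≤ l → cp.actr ⊤ (cp.φ l) = l) ∧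
     (∀ l₁ l₂ : C, cp.act ⊤ l₁ ≤ l₁ → cp.act ⊤ l₂ ≤ l₂ →
        (cp.φ l₁ ≤ cp.φ l₂ ↔ l₁ ≤ l₂))) := by
  have inv_r : ∀ r : C, cp.actr r ⊤ ≤ r → cp.act (cp.φ r) ⊤ = r := by
    intro r hr
    rw [cp.couple_left, ← cp.couple_right, hstrong, hCr r hr]
  have inv_l : ∀ l : C, cp.act ⊤ l ≤ l → cp.actr ⊤ (cp.φ l) = l := by
    intro l hl
    rw [cp.couple_right, ← cp.couple_left, hstrong, hCl l hl]
  refine ⟨⟨fun r hr => ?_, fun s hs => ?_, fun s hs => ?_, inv_r, fun r₁ r₂ h₁ h₂ => ?_⟩,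
    ⟨fun l hl => ?_, fun t ht => ?_, fun t ht => ?_, inv_l, fun l₁ l₂ h₁ h₂ => ?_⟩⟩
  · rw [← cp.φ_actr]; exact cp.phi_mono hr
  · rw [cp.act_actr]; exact cp.act_mono_right s le_top
  · rw [cp.φ_act, hstrong, hQr s hs]
  · constructor
    · intro h
      rw [← inv_r r₁ h₁, ← inv_r r₂ h₂]
      exact cp.act_mono_left ⊤ h
    · exact cp.phi_mono
  · rw [← cp.φ_act]; exact cp.phi_mono hl
  · rw [← cp.act_actr]; exact cp.actr_mono_left t le_top
  · rw [cp.φ_actr, hstrong, hQl t ht]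
  · constructor
    · intro h
      rw [← inv_l l₁ h₁, ← inv_l l₂ h₂]
      exact cp.actr_mono_right ⊤ h
    · exact cp.phi_mono
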